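/- arXiv:1808.05017 — 2 statements merged into one kernel-verified Lean document; each statement's English description precedes it below -/
import Mathlib

section
/- Let H be a hypergraph and x ∈ V(H). The number of minimal transversals of H that contain x equals #mtr(H \ H(x)) − #(tr(H) ∩ mtr(H \ H(x))), where # denotes cardinality. -/
variable {α : Type*} [DecidableEq α]

/-- The vertex set `V(H)` of a hypergraph `H`: the union of its hyperedges. -/
def verts (H : Finset (Finset α)) : Finset α := H.sup id

/-- `H(S)`: the set of hyperedges of `H` meeting `S`. -/
def edgesMeeting (H : Finset (Finset α)) (S : Finset α) : Finset (Finset α) :=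
  H.filter fun e => (e ∩ S).Nonempty

/-- `T` is a transversal of `H`: `T ⊆ V(H)` and `T` meets every hyperedge. -/
def IsTransversal (H : Finset (Finset α)) (T : Finset α) : Prop :=
  T ⊆ verts H ∧ ∀ e ∈ H, (T ∩ e).Nonempty

/-- `tr H`: the set of transversals of `H`. -/
def tr (H : Finset (Finset α)) : Finset (Finset α) :=
  (verts H).powerset.filter fun T => ∀ e ∈ H, (T ∩ e).Nonempty

/-- `mtr H`: the set of minimal transversals of `H`. -/
def mtr (H : Finset (Finset α)) : Finset (Finset α) :=
  (tr H).filter fun T => ∀ x ∈ T, T.erase x ∉ tr H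

/-- `T` is a `B`-blocked transversal of `H'`: a transversal of `H'` such that every `x ∈ T`
has a private hyperedge in `H' \ H'(B)`. -/
def IsBlockedTr (B : Finset α) (H' : Finset (Finset α)) (T : Finset α) : Prop :=
  IsTransversal H' T ∧ ∀ x ∈ T, ∃ e ∈ H' \ edgesMeeting H' B, e ∩ T = {x}

/-- `btr_B(H')`: the set of `B`-blocked transversals of `H'`. -/
def btr (B : Finset α) (H' : Finset (Finset α)) : Finset (Finset α) :=
  (tr H').filter fun T => ∀ x ∈ T, ∃ e ∈ H' \ edgesMeeting H' B, e ∩ T = {x}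

/-- `btr_B(H', S)`: the `B`-blocked transversals of `H'` included in `S`. -/
def btrS (B : Finset α) (H' : Finset (Finset α)) (S : Finset α) : Finset (Finset α) :=
  (btr B H').filter fun T => T ⊆ S

lemma mem_tr' {H : Finset (Finset α)} {T : Finset α} :
    T ∈ tr H ↔ T ⊆ verts H ∧ ∀ e ∈ H, (T ∩ e).Nonempty := by
  simp [tr, Finset.mem_filter, Finset.mem_powerset]

lemma mem_verts' {H : Finset (Finset α)} {y : α} :
    y ∈ verts H ↔ ∃ e ∈ H, y ∈ e := by
  simp [verts, Finset.mem_sup]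

lemma mem_H' {H : Finset (Finset α)} {x : α} {e : Finset α} :
    e ∈ H \ edgesMeeting H {x} ↔ e ∈ H ∧ x ∉ e := by
  simp [edgesMeeting, Finset.mem_sdiff, Finset.mem_filter, Finset.Nonempty,
    Finset.mem_inter]
  tauto

/-- The number of minimal transversals of `H` containing `x` equals
`#mtr(H \ H(x)) − #(tr(H) ∩ mtr(H \ H(x)))`. -/
theorem card_mtr_containing (H : Finset (Finset α)) (x : α) (hx : x ∈ verts H) :
    ((mtr H).filter fun T => x ∈ T).card =
      (mtr (H \ edgesMeeting H {x})).card -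
        (tr H ∩ mtr (H \ edgesMeeting H {x})).card := by
  classical
  set H' := H \ edgesMeeting H {x} with hH'def
  have hxv' : x ∉ verts H' := by
    rw [mem_verts']
    rintro ⟨e, he, hxe⟩
    exact (mem_H'.1 he).2 hxe
  have hsubV : verts H' ⊆ verts H := by
    intro y hy
    rw [mem_verts'] at hy ⊢
    obtain ⟨e, he, hye⟩ := hy
    exact ⟨e, (mem_H'.1 he).1, hye⟩
  have key : ((mtr H).filter fun T => x ∈ T).card = (mtr H' \ tr H).card := by
    apply Finset.card_bij (fun T _ => T.erase x)
    · -- maps into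
      intro T hT
      rw [Finset.mem_filter] at hT
      obtain ⟨hTm, hxT⟩ := hT
      rw [mtr, Finset.mem_filter] at hTm
      obtain ⟨hTtr, hTmin⟩ := hTm
      obtain ⟨hTsub, hTmeet⟩ := mem_tr'.1 hTtr
      -- private edges
      have priv : ∀ y ∈ T.erase x, ∃ e ∈ H', T ∩ e = {y} := by
        intro y hy
        obtain ⟨hyx, hyT⟩ := Finset.mem_erase.1 hy
        have h1 := hTmin y hyT
        rw [mem_tr'] at h1
        push_neg at h1
        have h2 := h1 ((Finset.erase_subset _ _).trans hTsub)
        obtain ⟨e, heH, hempt⟩ := h2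
        have hsub : T ∩ e ⊆ {y} := by
          intro z hz
          rw [Finset.mem_inter] at hz
          by_contra hzy
          rw [Finset.mem_singleton] at hzy
          exact (Finset.not_nonempty_iff_eq_empty.2 hempt) ⟨z, Finset.mem_inter.2 ⟨Finset.mem_erase.2 ⟨hzy, hz.1⟩, hz.2⟩⟩
        have hyin : y ∈ e := by
          obtain ⟨z, hz⟩ := hTmeet e heH
          have := hsub hz
          rw [Finset.mem_singleton] at this
          subst this
          exact (Finset.mem_inter.1 hz).2
        have hxe : x ∉ e := by
          intro hxe
          have : x ∈ T ∩ e := Finset.mem_inter.2 ⟨hxT, hxe⟩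
          have := hsub this
          rw [Finset.mem_singleton] at this
          exact hyx this.symm
        refine ⟨e, mem_H'.2 ⟨heH, hxe⟩, ?_⟩
        exact Finset.Subset.antisymm hsub (Finset.singleton_subset_iff.2
          (Finset.mem_inter.2 ⟨hyT, hyin⟩))
      rw [Finset.mem_sdiff]
      constructor
      · rw [mtr, Finset.mem_filter]
        constructor
        · rw [mem_tr']
          constructor
          · intro y hy
            obtain ⟨e, heH', heq⟩ := priv y hy
            have : y ∈ e := by
              have : y ∈ T ∩ e := heq ▸ Finset.mem_singleton_self y
              exact (Finset.mem_inter.1 this).2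
            exact mem_verts'.2 ⟨e, heH', this⟩
          · intro e he
            obtain ⟨z, hz⟩ := hTmeet e (mem_H'.1 he).1
            rw [Finset.mem_inter] at hz
            have hzx : z ≠ x := fun h => (mem_H'.1 he).2 (h ▸ hz.2)
            exact ⟨z, Finset.mem_inter.2 ⟨Finset.mem_erase.2 ⟨hzx, hz.1⟩, hz.2⟩⟩
        · intro y hy
          obtain ⟨e, heH', heq⟩ := priv y hy
          rw [mem_tr']
          push_neg
          intro _
          refine ⟨e, heH', ?_⟩
          ext z
          simp only [Finset.mem_inter, Finset.mem_erase, Finset.notMem_empty,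
            iff_false]
          rintro ⟨⟨hzy, hzx, hzT⟩, hze⟩
          have : z ∈ T ∩ e := Finset.mem_inter.2 ⟨hzT, hze⟩
          rw [heq, Finset.mem_singleton] at this
          exact hzy this
      · exact hTmin x hxT
    · -- injective
      intro T hT T' hT' heq
      rw [Finset.mem_filter] at hT hT'
      have := congrArg (insert x) heq
      rwa [Finset.insert_erase hT.2, Finset.insert_erase hT'.2] at this
    · -- surjective
      intro S hS
      rw [Finset.mem_sdiff] at hS
      obtain ⟨hSm, hStr⟩ := hS
      rw [mtr, Finset.mem_filter] at hSm
      obtain ⟨hStr', hSmin⟩ := hSm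
      obtain ⟨hSsub, hSmeet⟩ := mem_tr'.1 hStr'
      have hxS : x ∉ S := fun h => hxv' (hSsub h)
      refine ⟨insert x S, ?_, ?_⟩
      · rw [Finset.mem_filter]
        refine ⟨?_, Finset.mem_insert_self x S⟩
        rw [mtr, Finset.mem_filter]
        constructor
        · rw [mem_tr']
          constructor
          · exact Finset.insert_subset hx (hSsub.trans hsubV)
          · intro e he
            by_cases hxe : x ∈ e
            · exact ⟨x, Finset.mem_inter.2 ⟨Finset.mem_insert_self x S, hxe⟩⟩
            · obtain ⟨z, hz⟩ := hSmeet e (mem_H'.2 ⟨he, hxe⟩)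
              rw [Finset.mem_inter] at hz
              exact ⟨z, Finset.mem_inter.2 ⟨Finset.mem_insert_of_mem hz.1, hz.2⟩⟩
        · intro y hy
          rcases Finset.mem_insert.1 hy with hyx | hyS
          · subst hyx
            rwa [Finset.erase_insert hxS]
          · have hyx : y ≠ x := fun h => hxS (h ▸ hyS)
            have h1 := hSmin y hyS
            rw [mem_tr'] at h1
            push_neg at h1
            obtain ⟨e, heH', hempt⟩ := h1 ((Finset.erase_subset _ _).trans hSsub)
            rw [mem_tr']
            push_neg
            intro _
            refine ⟨e, (mem_H'.1 heH').1, ?_⟩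
            rw [← Finset.not_nonempty_iff_eq_empty]
            intro hne
            apply Finset.not_nonempty_iff_eq_empty.2 hempt
            obtain ⟨z, hz⟩ := hne
            rw [Finset.mem_inter, Finset.mem_erase, Finset.mem_insert] at hz
            obtain ⟨⟨hzy, hzS⟩, hze⟩ := hz
            have hzx : z ≠ x := fun h => (mem_H'.1 heH').2 (h ▸ hze)
            rcases hzS with h | h
            · exact absurd h hzx
            · exact ⟨z, Finset.mem_inter.2 ⟨Finset.mem_erase.2 ⟨hzy, h⟩, hze⟩⟩
      · rw [Finset.erase_insert hxS]
  rw [key]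
  have : mtr H' \ tr H = mtr H' \ (tr H ∩ mtr H') := by
    ext T
    simp only [Finset.mem_sdiff, Finset.mem_inter]
    tauto
  rw [this, Finset.card_sdiff_of_subset (Finset.inter_subset_right)]
end

section
/- Let H be a hypergraph, S, B ⊆ V(H) and x ∈ S. Let H_1 := H \ H(x) and H_2 := H \ (H(B) ∩ H(x)). Then, as an identity of cardinalities, #btr_B(H, S) + #btr_{B ∪ {x}}(H_2, S \ {x}) = #btr_B(H, S \ {x}) + #btr_B(H_1, S \ {x}); equivalently #btr_B(H, S) = #btr_B(H, S \ {x}) + #btr_B(H_1, S \ {x}) − #btr_{B ∪ {x}}(H_2, S \ {x}). -/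
variable {α : Type*} [DecidableEq α]

lemma subset_verts {H : Finset (Finset α)} {e : Finset α} (h : e ∈ H) : e ⊆ verts H :=
  Finset.le_sup (f := id) h

lemma mem_private {B : Finset α} {H' : Finset (Finset α)} {e : Finset α} :
    e ∈ H' \ edgesMeeting H' B ↔ e ∈ H' ∧ e ∩ B = ∅ := by
  simp only [edgesMeeting, Finset.mem_sdiff, Finset.mem_filter,
    Finset.not_nonempty_iff_eq_empty, not_and]
  constructor
  · rintro ⟨h1, h2⟩; exact ⟨h1, h2 h1⟩
  · rintro ⟨h1, h2⟩; exact ⟨h1, fun _ => h2⟩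

lemma mem_btrS {B : Finset α} {H' : Finset (Finset α)} {S T : Finset α} :
    T ∈ btrS B H' S ↔ T ⊆ verts H' ∧ (∀ e ∈ H', (T ∩ e).Nonempty) ∧
      (∀ y ∈ T, ∃ e, (e ∈ H' ∧ e ∩ B = ∅) ∧ e ∩ T = {y}) ∧ T ⊆ S := by
  simp only [btrS, btr, tr, Finset.mem_filter, Finset.mem_powerset, mem_private, and_assoc]

lemma singleton_hit {x : α} {e : Finset α} : (e ∩ ({x} : Finset α)).Nonempty ↔ x ∈ e := by
  constructor
  · rintro ⟨a, ha⟩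
    rw [Finset.mem_inter, Finset.mem_singleton] at ha
    exact ha.2 ▸ ha.1
  · intro h
    exact ⟨x, Finset.mem_inter.2 ⟨h, Finset.mem_singleton_self x⟩⟩

lemma memH1' (H : Finset (Finset α)) (x : α) (e : Finset α) :
    e ∈ H \ edgesMeeting H {x} ↔ e ∈ H ∧ x ∉ e := by
  simp only [edgesMeeting, Finset.mem_sdiff, Finset.mem_filter, singleton_hit, not_and]
  tauto

lemma memH2' (H : Finset (Finset α)) (B : Finset α) (x : α) (e : Finset α) :
    e ∈ H \ (edgesMeeting H B ∩ edgesMeeting H {x}) ↔ e ∈ H ∧ (x ∈ e → e ∩ B = ∅) := by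
  simp only [edgesMeeting, Finset.mem_sdiff, Finset.mem_inter, Finset.mem_filter,
    singleton_hit, not_and]
  rw [← Finset.not_nonempty_iff_eq_empty]
  tauto

/-- **Theorem 8.** With `H₁ := H \ H(x)` and `H₂ := H \ (H(B) ∩ H(x))`,
`#btr_B(H, S) + #btr_{B ∪ {x}}(H₂, S \ {x}) = #btr_B(H, S \ {x}) + #btr_B(H₁, S \ {x})`,
i.e. `#btr_B(H, S) = #btr_B(H, S \ {x}) + #btr_B(H₁, S \ {x}) − #btr_{B ∪ {x}}(H₂, S \ {x})`. -/
theorem card_btrS_rec (H : Finset (Finset α)) (S B : Finset α)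
    (hS : S ⊆ verts H) (hB : B ⊆ verts H) (x : α) (hx : x ∈ S) :
    (btrS B H S).card +
        (btrS (B ∪ {x}) (H \ (edgesMeeting H B ∩ edgesMeeting H {x})) (S \ {x})).card =
      (btrS B H (S \ {x})).card + (btrS B (H \ edgesMeeting H {x}) (S \ {x})).card := by
  classical
  set H1 := H \ edgesMeeting H {x} with hH1
  set H2 := H \ (edgesMeeting H B ∩ edgesMeeting H {x}) with hH2
  have memH1 : ∀ e, e ∈ H1 ↔ e ∈ H ∧ x ∉ e := memH1' H x
  have memH2 : ∀ e, e ∈ H2 ↔ e ∈ H ∧ (x ∈ e → e ∩ B = ∅) := memH2' H B x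
  have hxV : x ∈ verts H := hS hx
  set P : Finset α → Prop := fun T => ∃ e ∈ H, x ∈ e ∧ e ∩ B = ∅ ∧ e ∩ T = ∅ with hP
  -- Step 1: split btrS B H S according to membership of x.
  have hnot : (btrS B H S).filter (fun T => ¬ x ∈ T) = btrS B H (S \ {x}) := by
    ext T
    simp only [Finset.mem_filter, mem_btrS, Finset.subset_sdiff,
      Finset.disjoint_singleton_right]
    tauto
  have hsplit : (btrS B H S).card =
      ((btrS B H S).filter (fun T => x ∈ T)).card + (btrS B H (S \ {x})).card := by
    rw [← hnot, Finset.card_filter_add_card_filter_not (p := fun T => x ∈ T)]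
  -- Step 3: btrS (B ∪ {x}) H2 (S \ {x}) is the ¬P-part of btrS B H1 (S \ {x}).
  have hD : btrS (B ∪ {x}) H2 (S \ {x}) =
      (btrS B H1 (S \ {x})).filter (fun T => ¬ P T) := by
    ext T
    simp only [Finset.mem_filter, mem_btrS]
    constructor
    · rintro ⟨hv, htr, hpriv, hTS⟩
      have hpriv' : ∀ y ∈ T, ∃ e, (e ∈ H1 ∧ e ∩ B = ∅) ∧ e ∩ T = {y} := by
        intro y hy
        obtain ⟨e, ⟨heH2, heB⟩, hp⟩ := hpriv y hy
        have hxe : x ∉ e := by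
          intro hxe
          have : x ∈ e ∩ (B ∪ {x}) :=
            Finset.mem_inter.2 ⟨hxe, Finset.mem_union_right _ (Finset.mem_singleton_self x)⟩
          rw [heB] at this; exact absurd this (Finset.notMem_empty x)
        have heB' : e ∩ B = ∅ := by
          have hsub : e ∩ B ⊆ e ∩ (B ∪ {x}) :=
            Finset.inter_subset_inter (subset_refl e) Finset.subset_union_left
          rw [heB] at hsub; exact Finset.subset_empty.1 hsub
        exact ⟨e, ⟨(memH1 e).2 ⟨((memH2 e).1 heH2).1, hxe⟩, heB'⟩, hp⟩
      refine ⟨⟨?_, ?_, hpriv', hTS⟩, ?_⟩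
      · -- T ⊆ verts H1
        intro y hy
        obtain ⟨e, ⟨he1, _⟩, hp⟩ := hpriv' y hy
        have : y ∈ e ∩ T := hp ▸ Finset.mem_singleton_self y
        exact subset_verts he1 (Finset.mem_inter.1 this).1
      · -- transversal of H1
        intro e he
        obtain ⟨heH, hxe⟩ := (memH1 e).1 he
        exact htr e ((memH2 e).2 ⟨heH, fun h => absurd h hxe⟩)
      · -- ¬ P T
        rintro ⟨e, heH, hxe, heB, heT⟩
        have he2 : e ∈ H2 := (memH2 e).2 ⟨heH, fun _ => heB⟩
        obtain ⟨a, ha⟩ := htr e he2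
        rw [Finset.mem_inter] at ha
        have : a ∈ e ∩ T := Finset.mem_inter.2 ⟨ha.2, ha.1⟩
        rw [heT] at this; exact absurd this (Finset.notMem_empty a)
    · rintro ⟨⟨hv, htr, hpriv, hTS⟩, hnP⟩
      have hsub12 : H1 ⊆ H2 := by
        intro e he
        obtain ⟨heH, hxe⟩ := (memH1 e).1 he
        exact (memH2 e).2 ⟨heH, fun h => absurd h hxe⟩
      refine ⟨hv.trans (Finset.le_iff_subset.mp (Finset.sup_mono hsub12)), ?_, ?_, hTS⟩
      · intro e he
        obtain ⟨heH, himp⟩ := (memH2 e).1 he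
        by_cases hxe : x ∈ e
        · rcases Finset.eq_empty_or_nonempty (e ∩ T) with hemp | ⟨a, ha⟩
          · exact absurd ⟨e, heH, hxe, himp hxe, hemp⟩ hnP
          · rw [Finset.mem_inter] at ha
            exact ⟨a, Finset.mem_inter.2 ⟨ha.2, ha.1⟩⟩
        · exact htr e ((memH1 e).2 ⟨heH, hxe⟩)
      · intro y hy
        obtain ⟨e, ⟨he1, heB⟩, hp⟩ := hpriv y hy
        obtain ⟨heH, hxe⟩ := (memH1 e).1 he1
        refine ⟨e, ⟨hsub12 he1, ?_⟩, hp⟩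
        rw [Finset.inter_union_distrib_left, heB, Finset.inter_singleton_of_notMem hxe,
          Finset.empty_union]
  -- Step 2: bijection between blocked transversals through x and the P-part.
  have hbij : ((btrS B H S).filter (fun T => x ∈ T)).card =
      ((btrS B H1 (S \ {x})).filter P).card := by
    refine Finset.card_nbij' (fun T => T.erase x) (fun T => insert x T) ?_ ?_ ?_ ?_
    · -- forward map lands in target
      intro T hT
      rw [Finset.mem_coe, Finset.mem_filter, mem_btrS] at hT
      obtain ⟨⟨hv, htr, hpriv, hTS⟩, hxT⟩ := hT
      have hpriv' : ∀ y ∈ T.erase x, ∃ e, (e ∈ H1 ∧ e ∩ B = ∅) ∧ e ∩ T.erase x = {y} := by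
        intro y hy
        obtain ⟨hyx, hyT⟩ := Finset.mem_erase.1 hy
        obtain ⟨e, ⟨heH, heB⟩, hp⟩ := hpriv y hyT
        have hxe : x ∉ e := by
          intro hxe
          have : x ∈ e ∩ T := Finset.mem_inter.2 ⟨hxe, hxT⟩
          rw [hp, Finset.mem_singleton] at this
          exact hyx this.symm
        refine ⟨e, ⟨(memH1 e).2 ⟨heH, hxe⟩, heB⟩, ?_⟩
        rw [Finset.inter_erase, hp, Finset.erase_eq_of_notMem]
        rw [Finset.mem_singleton]; exact fun h => hyx h.symm
      rw [Finset.mem_coe, Finset.mem_filter, mem_btrS]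
      refine ⟨⟨?_, ?_, hpriv', ?_⟩, ?_⟩
      · intro y hy
        obtain ⟨e, ⟨he1, _⟩, hp⟩ := hpriv' y hy
        have : y ∈ e ∩ T.erase x := hp ▸ Finset.mem_singleton_self y
        exact subset_verts he1 (Finset.mem_inter.1 this).1
      · intro e he
        obtain ⟨heH, hxe⟩ := (memH1 e).1 he
        obtain ⟨a, ha⟩ := htr e heH
        rw [Finset.mem_inter] at ha
        have hax : a ≠ x := fun h => hxe (h ▸ ha.2)
        exact ⟨a, Finset.mem_inter.2 ⟨Finset.mem_erase.2 ⟨hax, ha.1⟩, ha.2⟩⟩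
      · intro y hy
        obtain ⟨hyx, hyT⟩ := Finset.mem_erase.1 hy
        exact Finset.mem_sdiff.2 ⟨hTS hyT, by simpa using hyx⟩
      · -- P (T.erase x)
        obtain ⟨e, ⟨heH, heB⟩, hp⟩ := hpriv x hxT
        have hxe : x ∈ e := by
          have : x ∈ e ∩ T := hp ▸ Finset.mem_singleton_self x
          exact (Finset.mem_inter.1 this).1
        refine ⟨e, heH, hxe, heB, ?_⟩
        rw [Finset.inter_erase, hp, Finset.erase_singleton]
    · -- backward map lands in source
      intro T hT
      rw [Finset.mem_coe, Finset.mem_filter, mem_btrS] at hT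
      obtain ⟨⟨hv, htr, hpriv, hTS⟩, e0, he0H, hxe0, he0B, he0T⟩ := hT
      have hxT : x ∉ T := fun h => (Finset.mem_sdiff.1 (hTS h)).2 (Finset.mem_singleton_self x)
      have hTS' : T ⊆ S := hTS.trans Finset.sdiff_subset
      rw [Finset.mem_coe, Finset.mem_filter, mem_btrS]
      refine ⟨⟨?_, ?_, ?_, Finset.insert_subset hx hTS'⟩, Finset.mem_insert_self x T⟩
      · exact Finset.insert_subset hxV (fun y hy => hS (hTS' hy))
      · intro e he
        by_cases hxe : x ∈ e
        · exact ⟨x, Finset.mem_inter.2 ⟨Finset.mem_insert_self x T, hxe⟩⟩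
        · obtain ⟨a, ha⟩ := htr e ((memH1 e).2 ⟨he, hxe⟩)
          rw [Finset.mem_inter] at ha
          exact ⟨a, Finset.mem_inter.2 ⟨Finset.mem_insert_of_mem ha.1, ha.2⟩⟩
      · intro y hy
        rcases Finset.mem_insert.1 hy with rfl | hyT
        · refine ⟨e0, ⟨he0H, he0B⟩, ?_⟩
          ext a
          simp only [Finset.mem_inter, Finset.mem_insert, Finset.mem_singleton]
          constructor
          · rintro ⟨hae, rfl | haT⟩
            · rfl
            · exact absurd (Finset.mem_inter.2 ⟨hae, haT⟩) (by simp [he0T])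
          · rintro rfl; exact ⟨hxe0, Or.inl rfl⟩
        · obtain ⟨e, ⟨he1, heB⟩, hp⟩ := hpriv y hyT
          obtain ⟨heH, hxe⟩ := (memH1 e).1 he1
          refine ⟨e, ⟨heH, heB⟩, ?_⟩
          rw [Finset.inter_insert_of_notMem hxe, hp]
    · -- left inverse
      intro T hT
      rw [Finset.mem_coe, Finset.mem_filter] at hT
      exact Finset.insert_erase hT.2
    · -- right inverse
      intro T hT
      rw [Finset.mem_coe, Finset.mem_filter, mem_btrS] at hT
      have hxT : x ∉ T :=
        fun h => (Finset.mem_sdiff.1 (hT.1.2.2.2 h)).2 (Finset.mem_singleton_self x)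
      exact Finset.erase_insert hxT
  -- Step 4: assemble.
  have hPsplit : ((btrS B H1 (S \ {x})).filter P).card +
      ((btrS B H1 (S \ {x})).filter (fun T => ¬ P T)).card = (btrS B H1 (S \ {x})).card :=
    Finset.card_filter_add_card_filter_not _
  rw [hsplit, hD, hbij]
  omega
end
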